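/- (Addition formula for weight (α, β).) For every real q with 0 < q < 1, integers n ≥ 0, α ≥ 1, β ≥ 1, every real x ≥ 0, every odd positive integer d and Dirichlet character χ modulo d, Ẽ^χ_{n,q}(x | α : β) = Σ_{l=0}^{n} C(n,l) q^{α l x} Ẽ^χ_{l,q}(α : β) [x:q^α]^{n−l}. -/

import Mathlib

open scoped BigOperators

/-- `[x:q] = (q^x - 1)/(q - 1)` with real exponentiation. -/
noncomputable def qNum (q x : ℝ) : ℝ := (q ^ x - 1) / (q - 1)

/-- Dirichlet-type weighted `q`-Euler polynomial with weight `(α, β)`: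
`Ẽ^χ_{n,q}(x|α:β) = [2:q^β] ∑_{m≥0} χ(m) (-1)^m q^{βm} [x+m:q^α]^n`. -/
noncomputable def qEulerChiAB (q : ℝ) (d : ℕ) (χ : DirichletCharacter ℂ d)
    (α β n : ℕ) (x : ℝ) : ℂ :=
  (qNum (q ^ β) 2 : ℂ) *
    ∑' m : ℕ, χ (m : ZMod d) * (-1 : ℂ) ^ m * (q : ℂ) ^ (β * m) *
      ((qNum (q ^ α) (x + (m : ℝ)) : ℝ) : ℂ) ^ n

lemma qNum_mem (Q : ℝ) (hQ0 : 0 < Q) (hQ1 : Q < 1) (y : ℝ) (hy : 0 ≤ y) :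
    0 ≤ qNum Q y ∧ qNum Q y ≤ 1 / (1 - Q) := by
  have h1 : Q ^ y ≤ 1 := Real.rpow_le_one hQ0.le hQ1.le hy
  have h2 : 0 < Q ^ y := Real.rpow_pos_of_pos hQ0 y
  have h3 : 0 < 1 - Q := by linarith
  have heq : qNum Q y = (1 - Q ^ y) / (1 - Q) := by
    unfold qNum; rw [div_eq_div_iff (by linarith) (by linarith)]; ring
  rw [heq]
  refine ⟨div_nonneg (by linarith) h3.le, ?_⟩
  gcongr
  · linarith

lemma summable_aux (q : ℝ) (hq0 : 0 < q) (hq1 : q < 1) (α β : ℕ) (hα : 1 ≤ α) (hβ : 1 ≤ β)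
    (d : ℕ) (χ : DirichletCharacter ℂ d) (k : ℕ) (x : ℝ) (hx : 0 ≤ x) :
    Summable (fun m : ℕ => χ (m : ZMod d) * (-1 : ℂ) ^ m * (q : ℂ) ^ (β * m) *
      ((qNum (q ^ α) (x + (m : ℝ)) : ℝ) : ℂ) ^ k) := by
  have hQ0 : (0:ℝ) < q ^ α := pow_pos hq0 α
  have hQ1 : q ^ α < 1 := pow_lt_one₀ hq0.le hq1 (by omega)
  have hB0 : (0:ℝ) < 1 / (1 - q ^ α) := by
    apply div_pos one_pos; linarith
  apply Summable.of_norm_bounded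
    (g := fun m : ℕ => (1 / (1 - q ^ α)) ^ k * (q ^ β) ^ m)
  · exact (summable_geometric_of_lt_one (pow_nonneg hq0.le β)
      (pow_lt_one₀ hq0.le hq1 (by omega))).mul_left _
  · intro m
    simp only [norm_mul, norm_pow, norm_neg, norm_one, one_pow, mul_one]
    have h1 : ‖χ (m : ZMod d)‖ ≤ 1 := χ.norm_le_one _
    have h2 : ‖(q : ℂ)‖ = q := by
      rw [Complex.norm_real, Real.norm_of_nonneg hq0.le]
    have h3 : ‖((qNum (q ^ α) (x + (m : ℝ)) : ℝ) : ℂ)‖ ≤ 1 / (1 - q ^ α) := by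
      rw [Complex.norm_real, Real.norm_of_nonneg
        (qNum_mem _ hQ0 hQ1 _ (by positivity)).1]
      exact (qNum_mem _ hQ0 hQ1 _ (by positivity)).2
    calc ‖χ (m : ZMod d)‖ * ‖(q:ℂ)‖ ^ (β * m) * ‖((qNum (q ^ α) (x + (m : ℝ)) : ℝ) : ℂ)‖ ^ k
        ≤ 1 * ‖(q:ℂ)‖ ^ (β * m) * (1 / (1 - q ^ α)) ^ k := by gcongr
      _ = (1 / (1 - q ^ α)) ^ k * (q ^ β) ^ m := by
          rw [h2, one_mul, ← pow_mul]; ring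

theorem statement17 (q : ℝ) (hq0 : 0 < q) (hq1 : q < 1)
    (n α β : ℕ) (hα : 1 ≤ α) (hβ : 1 ≤ β) (x : ℝ) (hx : 0 ≤ x)
    (d : ℕ) (hd0 : 0 < d) (hdo : Odd d) (χ : DirichletCharacter ℂ d) :
    qEulerChiAB q d χ α β n x =
      ∑ l ∈ Finset.range (n + 1),
        (n.choose l : ℂ) * ((q ^ ((↑(α * l) : ℝ) * x) : ℝ) : ℂ) *
          qEulerChiAB q d χ α β l 0 * ((qNum (q ^ α) x : ℝ) : ℂ) ^ (n - l) := by
  have hQ0 : (0:ℝ) < q ^ α := pow_pos hq0 α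
  have hQ1 : q ^ α < 1 := pow_lt_one₀ hq0.le hq1 (by omega)
  have hQne : q ^ α - 1 ≠ 0 := by intro h; linarith [sub_eq_zero.mp h]
  -- rpow identity
  have hpow : ∀ l : ℕ, ((q ^ α : ℝ) ^ x) ^ l = q ^ ((↑(α * l) : ℝ) * x) := by
    intro l
    rw [← Real.rpow_natCast ((q ^ α) ^ x) l, ← Real.rpow_natCast q α,
      ← Real.rpow_mul hq0.le, ← Real.rpow_mul hq0.le]
    congr 1
    push_cast
    ring
  -- addition identity
  have hadd : ∀ m : ℕ, qNum (q ^ α) (x + m) =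
      (q ^ α : ℝ) ^ x * qNum (q ^ α) (0 + m) + qNum (q ^ α) x := by
    intro m
    unfold qNum
    rw [Real.rpow_add hQ0, zero_add]
    field_simp
    ring
  -- real binomial expansion
  have keyR : ∀ m : ℕ, (qNum (q ^ α) (x + m)) ^ n =
      ∑ l ∈ Finset.range (n + 1),
        (qNum (q ^ α) (0 + m)) ^ l *
          (q ^ ((↑(α * l) : ℝ) * x) * (qNum (q ^ α) x) ^ (n - l) * (n.choose l : ℝ)) := by
    intro m
    rw [hadd m, add_pow]
    refine Finset.sum_congr rfl fun l _ => ?_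
    rw [mul_pow, hpow l]
    ring
  -- summability of the basic series at 0, exponent l
  have hsumm : ∀ l : ℕ, Summable (fun m : ℕ =>
      χ (m : ZMod d) * (-1 : ℂ) ^ m * (q : ℂ) ^ (β * m) *
        ((qNum (q ^ α) (0 + (m : ℝ)) : ℝ) : ℂ) ^ l) :=
    fun l => summable_aux q hq0 hq1 α β hα hβ d χ l 0 le_rfl
  unfold qEulerChiAB
  have step1 : (∑' m : ℕ, χ (m : ZMod d) * (-1 : ℂ) ^ m * (q : ℂ) ^ (β * m) *
      ((qNum (q ^ α) (x + (m : ℝ)) : ℝ) : ℂ) ^ n) =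
      ∑' m : ℕ, ∑ l ∈ Finset.range (n + 1),
        (χ (m : ZMod d) * (-1 : ℂ) ^ m * (q : ℂ) ^ (β * m) *
          ((qNum (q ^ α) (0 + (m : ℝ)) : ℝ) : ℂ) ^ l) *
          (((q ^ ((↑(α * l) : ℝ) * x) : ℝ) : ℂ) *
            ((qNum (q ^ α) x : ℝ) : ℂ) ^ (n - l) * (n.choose l : ℂ)) := by
    refine tsum_congr fun m => ?_
    have h2 : (((qNum (q ^ α) (x + (m:ℝ))) : ℝ) : ℂ) ^ n =
        ∑ l ∈ Finset.range (n + 1),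
          (((qNum (q ^ α) (0 + (m:ℝ))) : ℝ) : ℂ) ^ l *
            (((q ^ ((↑(α * l) : ℝ) * x) : ℝ) : ℂ) * ((qNum (q ^ α) x : ℝ) : ℂ) ^ (n - l) *
              (n.choose l : ℂ)) := by
      exact_mod_cast congrArg (fun t : ℝ => (t : ℂ)) (keyR m)
    rw [h2, Finset.mul_sum]
    refine Finset.sum_congr rfl fun l _ => ?_
    ring
  rw [step1, Summable.tsum_finsetSum (fun l _ => (hsumm l).mul_right _)]
  rw [Finset.mul_sum]
  refine Finset.sum_congr rfl fun l _ => ?_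
  rw [tsum_mul_right]
  ring
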